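/- Let d ≥ 3, p > 1 real, and let g : ℝ^d → [0,∞) be measurable. For q with p + 2/d < q < p(1+2/d), setting m := 3d(d-2)(p-1)/((d+2)p - dq), the following interpolation holds: ∫ g^q dx ≤ (∫ g^{dp/(d-2)} ⟨x⟩^{-3d} dx)^{(d-2)/d} · (∫ g^p dx)^{(q - p - 2/d)/(p-1)} · (∫ g ⟨x⟩^m dx)^{((d+2)p - dq)/(d(p-1))}, where ⟨x⟩ := (1+|x|²)^{1/2} (all integrals assumed finite). -/

import Mathlib

open Real MeasureTheory

/-- Weighted Hölder interpolation (inequality (star)): for nonnegative measurable `g` on `ℝ^d`,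
`∫ g^q ≤ (∫ g^(dp/(d-2)) ⟨x⟩^(-3d))^((d-2)/d) (∫ g^p)^((q-p-2/d)/(p-1))
  (∫ g ⟨x⟩^m)^(((d+2)p-dq)/(d(p-1)))` with `m = 3d(d-2)(p-1)/((d+2)p - dq)`. -/
theorem weighted_interpolation (d : ℕ) (hd : 3 ≤ d) (p q : ℝ)
    (hp : 1 < p) (hq₁ : p + 2 / d < q) (hq₂ : q < p * (1 + 2 / d))
    (g : EuclideanSpace ℝ (Fin d) → ℝ) (hg_meas : Measurable g) (hg : ∀ x, 0 ≤ g x)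
    (h₁ : Integrable (fun x => g x ^ ((d : ℝ) * p / ((d : ℝ) - 2)) *
      (1 + ‖x‖ ^ 2) ^ ((1 : ℝ) / 2 * (-(3 * (d : ℝ))))))
    (h₂ : Integrable (fun x => g x ^ p))
    (h₃ : Integrable (fun x => g x *
      (1 + ‖x‖ ^ 2) ^ ((1 : ℝ) / 2 * (3 * (d : ℝ) * (d - 2) * (p - 1) / (((d : ℝ) + 2) * p - d * q))))) :
    (∫ x, g x ^ q) ≤
      (∫ x, g x ^ ((d : ℝ) * p / ((d : ℝ) - 2)) *
          (1 + ‖x‖ ^ 2) ^ ((1 : ℝ) / 2 * (-(3 * (d : ℝ))))) ^ (((d : ℝ) - 2) / d) *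
      (∫ x, g x ^ p) ^ ((q - p - 2 / d) / (p - 1)) *
      (∫ x, g x *
          (1 + ‖x‖ ^ 2) ^ ((1 : ℝ) / 2 *
            (3 * (d : ℝ) * (d - 2) * (p - 1) / (((d : ℝ) + 2) * p - d * q)))) ^
        ((((d : ℝ) + 2) * p - d * q) / (d * (p - 1))) := by
  have hd3 : (3 : ℝ) ≤ (d : ℝ) := by exact_mod_cast hd
  have hd0 : (0 : ℝ) < d := by linarith
  have hd2 : (0 : ℝ) < (d : ℝ) - 2 := by linarith
  have hp1 : (0 : ℝ) < p - 1 := by linarith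
  have hA : 0 < ((d : ℝ) + 2) * p - d * q := by
    have h := mul_lt_mul_of_pos_left hq₂ hd0
    have heq : (d : ℝ) * (p * (1 + 2 / d)) = ((d : ℝ) + 2) * p := by
      field_simp
    rw [heq] at h; linarith
  -- abbreviations
  set e1 : ℝ := (1 : ℝ) / 2 * (-(3 * (d : ℝ))) with he1
  set e3 : ℝ := (1 : ℝ) / 2 * (3 * (d : ℝ) * (d - 2) * (p - 1) / (((d : ℝ) + 2) * p - d * q)) with he3
  set a1 : ℝ := (d : ℝ) * p / ((d : ℝ) - 2) with ha1
  set θ1 : ℝ := ((d : ℝ) - 2) / d with hθ1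
  set θ2 : ℝ := (q - p - 2 / d) / (p - 1) with hθ2
  set θ3 : ℝ := (((d : ℝ) + 2) * p - d * q) / (d * (p - 1)) with hθ3
  have hθ1pos : 0 < θ1 := div_pos hd2 hd0
  have hθ2pos : 0 < θ2 := div_pos (by linarith) hp1
  have hθ3pos : 0 < θ3 := div_pos hA (by positivity)
  have ha1pos : 0 < a1 := div_pos (by positivity) hd2
  have hqpos : 0 < q := by
    have : (0:ℝ) < 2 / d := by positivity
    linarith
  set f1 : EuclideanSpace ℝ (Fin d) → ℝ := fun x => g x ^ a1 * (1 + ‖x‖ ^ 2) ^ e1 with hf1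
  set f2 : EuclideanSpace ℝ (Fin d) → ℝ := fun x => g x ^ p with hf2
  set f3 : EuclideanSpace ℝ (Fin d) → ℝ := fun x => g x * (1 + ‖x‖ ^ 2) ^ e3 with hf3
  have hwpos : ∀ x : EuclideanSpace ℝ (Fin d), (0:ℝ) < 1 + ‖x‖ ^ 2 := fun x => by positivity
  have hf1n : ∀ x, 0 ≤ f1 x := fun x => by
    have := hwpos x; have := hg x; positivity
  have hf2n : ∀ x, 0 ≤ f2 x := fun x => Real.rpow_nonneg (hg x) p
  have hf3n : ∀ x, 0 ≤ f3 x := fun x => by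
    have := hwpos x; have := hg x; positivity
  -- exponent identities
  have hexpg : a1 * θ1 + p * θ2 + θ3 = q := by
    rw [ha1, hθ1, hθ2, hθ3]
    field_simp
    ring
  have hexpw : e1 * θ1 + e3 * θ3 = 0 := by
    rw [he1, he3, hθ1, hθ3]
    have hk : 3 * (d : ℝ) * (d - 2) * (p - 1) / (((d : ℝ) + 2) * p - d * q) *
        ((((d : ℝ) + 2) * p - d * q) / (d * (p - 1))) = 3 * ((d : ℝ) - 2) := by
      rw [div_mul_div_comm, div_eq_iff (mul_pos hA (mul_pos hd0 hp1)).ne']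
      ring
    have hdd : (d : ℝ) * (d : ℝ)⁻¹ = 1 := mul_inv_cancel₀ hd0.ne'
    linear_combination (1 / 2 : ℝ) * hk - (3 / 2 : ℝ) * ((d : ℝ) - 2) * hdd
  -- pointwise identity
  have hpt : ∀ x, f1 x ^ θ1 * f2 x ^ θ2 * f3 x ^ θ3 = g x ^ q := by
    intro x
    set w : ℝ := 1 + ‖x‖ ^ 2 with hw
    have hw0 : 0 < w := hwpos x
    rcases eq_or_lt_of_le (hg x) with h0 | hgx
    · have hg0 : g x = 0 := h0.symm
      simp only [hf1, hf2, hf3, hg0]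
      rw [Real.zero_rpow ha1pos.ne', Real.zero_rpow hqpos.ne', zero_mul, zero_mul,
        Real.zero_rpow hθ1pos.ne', zero_mul, zero_mul]
    · have key : f1 x ^ θ1 * f2 x ^ θ2 * f3 x ^ θ3
          = g x ^ (a1 * θ1 + p * θ2 + θ3) * w ^ (e1 * θ1 + e3 * θ3) := by
        simp only [hf1, hf2, hf3, ← hw]
        rw [Real.mul_rpow (Real.rpow_nonneg (hg x) _) (Real.rpow_nonneg hw0.le _),
          Real.mul_rpow (hg x) (Real.rpow_nonneg hw0.le _),
          ← Real.rpow_mul (hg x), ← Real.rpow_mul hw0.le,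
          ← Real.rpow_mul (hg x), ← Real.rpow_mul hw0.le,
          Real.rpow_add hgx, Real.rpow_add hgx, Real.rpow_add hw0]
        ring
      rw [key, hexpg, hexpw, Real.rpow_zero, mul_one]
  -- measurability
  have hwmeas : Measurable fun x : EuclideanSpace ℝ (Fin d) => (1 + ‖x‖ ^ 2 : ℝ) :=
    measurable_const.add (measurable_norm.pow_const 2)
  have hm1 : Measurable f1 := (hg_meas.pow measurable_const).mul (hwmeas.pow measurable_const)
  have hm2 : Measurable f2 := hg_meas.pow measurable_const
  have hm3 : Measurable f3 := hg_meas.mul (hwmeas.pow measurable_const)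
  -- Hölder in ℝ≥0∞
  set F : Fin 3 → EuclideanSpace ℝ (Fin d) → ENNReal :=
    ![fun x => ENNReal.ofReal (f1 x), fun x => ENNReal.ofReal (f2 x),
      fun x => ENNReal.ofReal (f3 x)] with hF
  set Θ : Fin 3 → ℝ := ![θ1, θ2, θ3] with hΘ
  have hFmeas : ∀ i ∈ Finset.univ, AEMeasurable (F i) (volume) := by
    intro i _
    fin_cases i
    · exact hm1.ennreal_ofReal.aemeasurable
    · exact hm2.ennreal_ofReal.aemeasurable
    · exact hm3.ennreal_ofReal.aemeasurable
  have hΘsum : ∑ i, Θ i = 1 := by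
    rw [Fin.sum_univ_three]
    simp only [hΘ, Matrix.cons_val_zero, Matrix.cons_val_one, Matrix.head_cons,
      Matrix.cons_val_two, Matrix.tail_cons]
    rw [hθ1, hθ2, hθ3]
    field_simp
    ring
  have hΘnn : ∀ i ∈ Finset.univ, 0 ≤ Θ i := by
    intro i _
    fin_cases i
    · exact hθ1pos.le
    · exact hθ2pos.le
    · exact hθ3pos.le
  have hholder := ENNReal.lintegral_prod_norm_pow_le (μ := volume) Finset.univ hFmeas hΘsum hΘnn
  simp only [Fin.prod_univ_three, hF, hΘ, Matrix.cons_val_zero, Matrix.cons_val_one,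
    Matrix.head_cons, Matrix.cons_val_two, Matrix.tail_cons] at hholder
  -- rewrite LHS integrand
  have hLHS : (∫⁻ x, ENNReal.ofReal (f1 x) ^ θ1 * ENNReal.ofReal (f2 x) ^ θ2 *
      ENNReal.ofReal (f3 x) ^ θ3) = ∫⁻ x, ENNReal.ofReal (g x ^ q) := by
    refine lintegral_congr fun x => ?_
    rw [ENNReal.ofReal_rpow_of_nonneg (hf1n x) hθ1pos.le,
      ENNReal.ofReal_rpow_of_nonneg (hf2n x) hθ2pos.le,
      ENNReal.ofReal_rpow_of_nonneg (hf3n x) hθ3pos.le,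
      ← ENNReal.ofReal_mul (Real.rpow_nonneg (hf1n x) _),
      ← ENNReal.ofReal_mul (mul_nonneg (Real.rpow_nonneg (hf1n x) _)
        (Real.rpow_nonneg (hf2n x) _)), hpt x]
  rw [hLHS] at hholder
  -- identify lintegrals with Bochner integrals
  have hI1 : (∫⁻ x, ENNReal.ofReal (f1 x)) = ENNReal.ofReal (∫ x, f1 x) :=
    (MeasureTheory.ofReal_integral_eq_lintegral_ofReal h₁
      (Filter.Eventually.of_forall hf1n)).symm
  have hI2 : (∫⁻ x, ENNReal.ofReal (f2 x)) = ENNReal.ofReal (∫ x, f2 x) :=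
    (MeasureTheory.ofReal_integral_eq_lintegral_ofReal h₂
      (Filter.Eventually.of_forall hf2n)).symm
  have hI3 : (∫⁻ x, ENNReal.ofReal (f3 x)) = ENNReal.ofReal (∫ x, f3 x) :=
    (MeasureTheory.ofReal_integral_eq_lintegral_ofReal h₃
      (Filter.Eventually.of_forall hf3n)).symm
  rw [hI1, hI2, hI3] at hholder
  have hB : ENNReal.ofReal (∫ x, f1 x) ^ θ1 * ENNReal.ofReal (∫ x, f2 x) ^ θ2 *
      ENNReal.ofReal (∫ x, f3 x) ^ θ3 ≠ ⊤ :=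
    ENNReal.mul_ne_top
      (ENNReal.mul_ne_top (ENNReal.rpow_ne_top_of_nonneg hθ1pos.le ENNReal.ofReal_ne_top)
        (ENNReal.rpow_ne_top_of_nonneg hθ2pos.le ENNReal.ofReal_ne_top))
      (ENNReal.rpow_ne_top_of_nonneg hθ3pos.le ENNReal.ofReal_ne_top)
  have hgq : (∫ x, g x ^ q) = (∫⁻ x, ENNReal.ofReal (g x ^ q)).toReal := by
    rw [MeasureTheory.integral_eq_lintegral_of_nonneg_ae
      (Filter.Eventually.of_forall fun x => Real.rpow_nonneg (hg x) q)
      (hg_meas.pow measurable_const).aestronglyMeasurable]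
  have hmono := ENNReal.toReal_mono hB hholder
  rw [← hgq] at hmono
  refine hmono.trans_eq ?_
  rw [ENNReal.toReal_mul, ENNReal.toReal_mul, ← ENNReal.toReal_rpow, ← ENNReal.toReal_rpow,
    ← ENNReal.toReal_rpow, ENNReal.toReal_ofReal (integral_nonneg hf1n),
    ENNReal.toReal_ofReal (integral_nonneg hf2n), ENNReal.toReal_ofReal (integral_nonneg hf3n)]
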